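/- Let P : ℝⁿ → [0, ∞) be a submetry. Then the fiber L = P⁻¹(0) is a closed convex subset of ℝⁿ, and P equals the distance function to L. -/

import Mathlib

open Metric

lemma key_id {E : Type*} [NormedAddCommGroup E] [InnerProductSpace ℝ E]
    (u v : E) (a b : ℝ) (hab : a + b = 1) :
    a*‖u‖^2 + b*‖v‖^2 = ‖a•u + b•v‖^2 + a*b*‖u-v‖^2 := by
  have h1 : ‖a•u + b•v‖^2 = a^2*‖u‖^2 + 2*(a*b)*(inner ℝ u v : ℝ) + b^2*‖v‖^2 := by
    rw [← real_inner_self_eq_norm_sq, inner_add_add_self]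
    simp [inner_add_add_self, real_inner_smul_left, real_inner_smul_right,
      real_inner_comm u v, real_inner_self_eq_norm_sq, norm_smul, mul_pow, sq_abs]
    ring
  have h2 : ‖u - v‖^2 = ‖u‖^2 - 2*(inner ℝ u v : ℝ) + ‖v‖^2 := by
    rw [← real_inner_self_eq_norm_sq, inner_sub_sub_self]
    simp [inner_sub_sub_self, real_inner_comm u v, real_inner_self_eq_norm_sq]
    ring
  linear_combination -h1 - a*b*h2 - (a*‖u‖^2 + b*‖v‖^2)*hab

/-- `P` is a submetry: it maps every closed ball surjectively onto the
closed ball of the same radius around the image of the center. -/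
def IsSubmetry {X Y : Type*} [MetricSpace X] [MetricSpace Y] (P : X → Y) : Prop :=
  ∀ (x : X) (r : ℝ), 0 ≤ r → P '' Metric.closedBall x r = Metric.closedBall (P x) r

theorem submetry_Rn_onto_halfLine
    (n : ℕ) (hn : 1 ≤ n)
    (P : EuclideanSpace ℝ (Fin n) → Set.Ici (0 : ℝ)) (hP : IsSubmetry P) :
    IsClosed (P ⁻¹' {⟨0, Set.self_mem_Ici⟩}) ∧
    Convex ℝ (P ⁻¹' {⟨0, Set.self_mem_Ici⟩}) ∧
    ∀ x, (P x : ℝ) = Metric.infDist x (P ⁻¹' {⟨0, Set.self_mem_Ici⟩}) := by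
  set z0 : Set.Ici (0 : ℝ) := ⟨0, Set.self_mem_Ici⟩ with hz0
  set L := P ⁻¹' {z0} with hL
  -- P is 1-Lipschitz
  have hlip : ∀ x y, dist (P x) (P y) ≤ dist x y := by
    intro x y
    have h := hP x (dist x y) dist_nonneg
    have hy : P y ∈ closedBall (P x) (dist x y) := by
      rw [← h]
      exact ⟨y, by simp [dist_comm], rfl⟩
    rw [mem_closedBall] at hy
    rwa [dist_comm]
  -- surjectivity onto closed balls
  have hsurj : ∀ x (r : ℝ), 0 ≤ r → ∀ t : Set.Ici (0 : ℝ), dist t (P x) ≤ r →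
      ∃ z, dist z x ≤ r ∧ P z = t := by
    intro x r hr t ht
    have h := hP x r hr
    have : t ∈ P '' closedBall x r := by rw [h]; exact mem_closedBall.mpr ht
    obtain ⟨z, hz, hzt⟩ := this
    exact ⟨z, mem_closedBall.mp hz, hzt⟩
  -- P x nonneg
  have hPnn : ∀ x, (0 : ℝ) ≤ (P x : ℝ) := fun x => (P x).2
  -- downward: nearest zero point
  have hdown : ∀ x, ∃ z, dist z x ≤ (P x : ℝ) ∧ P z = z0 := by
    intro x
    refine hsurj x (P x : ℝ) (hPnn x) z0 ?_
    rw [Subtype.dist_eq, Real.dist_eq]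
    simp [hz0, abs_of_nonpos, hPnn x]
  -- upward
  have hup : ∀ x (r : ℝ), 0 ≤ r → ∃ z, dist z x ≤ r ∧ (P z : ℝ) = (P x : ℝ) + r := by
    intro x r hr
    have hm : ((P x : ℝ) + r) ∈ Set.Ici (0 : ℝ) := by
      simp only [Set.mem_Ici]; linarith [hPnn x]
    obtain ⟨z, hz, hzt⟩ := hsurj x r hr ⟨(P x : ℝ) + r, hm⟩ (by
      rw [Subtype.dist_eq, Real.dist_eq]; simp [abs_of_nonneg hr])
    exact ⟨z, hz, by rw [hzt]⟩
  -- membership in L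
  have hmemL : ∀ z, z ∈ L ↔ (P z : ℝ) = 0 := by
    intro z
    constructor
    · intro h
      have : P z = z0 := h
      rw [this]
    · intro h
      have : P z = z0 := Subtype.ext h
      exact this
  -- closedness
  have hcont : Continuous P := by
    apply LipschitzWith.continuous (K := 1)
    intro x y
    rw [edist_dist, edist_dist]
    simp only [ENNReal.coe_one, one_mul]
    exact ENNReal.ofReal_le_ofReal (hlip x y)
  have hclosed : IsClosed L := IsClosed.preimage hcont isClosed_singleton
  -- distance formula
  have hdist : ∀ x, (P x : ℝ) = Metric.infDist x L := by
    intro x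
    obtain ⟨z, hz1, hz2⟩ := hdown x
    have hzL : z ∈ L := hz2
    apply le_antisymm
    · by_contra hlt
      push_neg at hlt
      obtain ⟨y, hy, hyd⟩ := (infDist_lt_iff ⟨z, hzL⟩).mp hlt
      have h := hlip x y
      have hy0 : (P y : ℝ) = 0 := (hmemL y).mp hy
      rw [Subtype.dist_eq, Real.dist_eq, hy0, sub_zero, abs_of_nonneg (hPnn x)] at h
      linarith
    · calc Metric.infDist x L ≤ dist x z := infDist_le_dist_of_mem hzL
        _ ≤ (P x : ℝ) := by rwa [dist_comm]
  refine ⟨hclosed, ?_, hdist⟩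
  -- convexity
  intro p hp q hq a b ha hb hab
  set x := a • p + b • q with hx
  rw [Set.mem_preimage, Set.mem_singleton_iff]
  apply Subtype.ext
  show (P x : ℝ) = (z0 : ℝ)
  simp only [hz0]
  by_contra hne
  have hd : 0 < (P x : ℝ) := lt_of_le_of_ne (hPnn x) (Ne.symm hne)
  set d : ℝ := (P x : ℝ) with hdd
  set C : ℝ := a * b * ‖p - q‖^2 with hC
  have hCnn : 0 ≤ C := by positivity
  set r : ℝ := C / (2 * d) + 1 with hr
  have hrnn : (0:ℝ) ≤ r := by positivity
  obtain ⟨z, hz1, hz2⟩ := hup x r hrnn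
  have hzp : d + r ≤ ‖z - p‖ := by
    have h := hlip z p
    have hp0 : (P p : ℝ) = 0 := (hmemL p).mp hp
    rw [Subtype.dist_eq, Real.dist_eq, hp0, hz2, dist_eq_norm] at h
    calc d + r = |(d + r) - 0| := by rw [sub_zero]; exact (abs_of_nonneg (by linarith [hPnn x])).symm
      _ ≤ ‖z - p‖ := h
  have hzq : d + r ≤ ‖z - q‖ := by
    have h := hlip z q
    have hq0 : (P q : ℝ) = 0 := (hmemL q).mp hq
    rw [Subtype.dist_eq, Real.dist_eq, hq0, hz2, dist_eq_norm] at h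
    calc d + r = |(d + r) - 0| := by rw [sub_zero]; exact (abs_of_nonneg (by linarith [hPnn x])).symm
      _ ≤ ‖z - q‖ := h
  have hzx : ‖z - x‖ ≤ r := by rw [← dist_eq_norm]; exact hz1
  have hid : a*‖z - p‖^2 + b*‖z - q‖^2 = ‖z - x‖^2 + a*b*‖p - q‖^2 := by
    have h := key_id (z - p) (z - q) a b hab
    have h1 : a • (z - p) + b • (z - q) = z - x := by
      rw [hx, smul_sub, smul_sub]
      have hz' : a • z + b • z = z := by rw [← add_smul, hab, one_smul]
      rw [sub_add_sub_comm, hz']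
    have h2 : (z - p) - (z - q) = q - p := by abel
    rw [h1, h2] at h
    rw [h, norm_sub_rev q p]
  -- derive contradiction
  have hdr : 0 ≤ d + r := by linarith
  have h1 : (d + r)^2 ≤ ‖z - p‖^2 := pow_le_pow_left₀ hdr hzp 2
  have h2 : (d + r)^2 ≤ ‖z - q‖^2 := pow_le_pow_left₀ hdr hzq 2
  have h3 : (d + r)^2 ≤ r^2 + C := by
    have ha1 : a * (d + r)^2 ≤ a * ‖z - p‖^2 := mul_le_mul_of_nonneg_left h1 ha
    have hb1 : b * (d + r)^2 ≤ b * ‖z - q‖^2 := mul_le_mul_of_nonneg_left h2 hb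
    have hzx2 : ‖z - x‖^2 ≤ r^2 := pow_le_pow_left₀ (norm_nonneg _) hzx 2
    have hsum : a * (d + r)^2 + b * (d + r)^2 = (d + r)^2 := by
      linear_combination (d+r)^2 * hab
    linarith [ha1, hb1, hid, hzx2, hsum]
  have hrC : 2 * d * r = C + 2 * d := by
    rw [hr]; field_simp
  have hexp : (d+r)^2 = d^2 + 2*d*r + r^2 := by ring
  linarith [h3, hrC, hexp, sq_nonneg d, hd]
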